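/- For any integers n > 0 and q coprime to n, the sign of the multiplication-by-q permutation of Z/nZ equals: (-1)^{(q-1)/2} if n ≡ 0 (mod 4); the Jacobi symbol (q/n) if n is odd; and 1 if n ≡ 2 (mod 4). -/

import Mathlib

open Equiv Equiv.Perm


/-- multiplication by a unit as a permutation -/
def mulPerm {n : ℕ} (u : (ZMod n)ˣ) : Equiv.Perm (ZMod n) :=
  ⟨fun x => u * x, fun x => (u⁻¹ : (ZMod n)ˣ) * x,
   fun x => by simp [Units.inv_mul_cancel_left], fun x => by simp [Units.mul_inv_cancel_left]⟩

@[simp] lemma mulPerm_apply {n : ℕ} (u : (ZMod n)ˣ) (x : ZMod n) : mulPerm u x = u * x := rfl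

lemma mulPerm_mul {n : ℕ} (u v : (ZMod n)ˣ) : mulPerm (u * v) = mulPerm u * mulPerm v := by
  ext x; simp [mul_assoc]

lemma mulPerm_pow {n : ℕ} (u : (ZMod n)ˣ) (k : ℕ) : mulPerm (u ^ k) = (mulPerm u) ^ k := by
  induction k with
  | zero => ext x; simp
  | succ k ih => rw [pow_succ, pow_succ, mulPerm_mul, ih]

lemma isUnit_cast_of_gcd {n : ℕ} {q : ℤ} (h : Int.gcd q n = 1) : IsUnit ((q : ZMod n)) := by
  obtain ⟨u, v, huv⟩ := Int.isCoprime_iff_gcd_eq_one.mpr h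
  refine IsUnit.of_mul_eq_one ((u : ZMod n)) ?_
  have : ((u * q + v * n : ℤ) : ZMod n) = 1 := by rw [huv]; norm_num
  push_cast at this
  rw [ZMod.natCast_self] at this
  linear_combination this

lemma exists_mulPerm (n : ℕ) (q : ℤ) (h : Int.gcd q n = 1) :
    ∃ π : Equiv.Perm (ZMod n), ∀ x, π x = (q : ZMod n) * x := by
  obtain ⟨u, hu⟩ := isUnit_cast_of_gcd (n := n) h
  exact ⟨mulPerm u, fun x => by simp [hu]⟩

lemma perm_eq_mulPerm {n : ℕ} {q : ℤ} (u : (ZMod n)ˣ) (hu : (u : ZMod n) = (q : ZMod n))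
    (π : Equiv.Perm (ZMod n)) (hπ : ∀ x, π x = (q : ZMod n) * x) : π = mulPerm u := by
  ext x; simp [hπ, hu]

/- addLeft lemmas -/
lemma addLeft_pow {m : ℕ} (c : ZMod m) (k : ℕ) :
    (Equiv.addLeft c) ^ k = Equiv.addLeft ((k : ZMod m) * c) := by
  induction k with
  | zero => ext x; simp
  | succ k ih =>
    rw [pow_succ, ih]; ext x
    show (↑k * c) + (c + x) = (↑(k+1) : ZMod m) * c + x
    push_cast; ring

lemma addLeft_eq_pow {m : ℕ} [NeZero m] (c : ZMod m) :
    Equiv.addLeft c = (Equiv.addLeft (1 : ZMod m)) ^ c.val := by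
  rw [addLeft_pow, mul_one, ZMod.natCast_rightInverse c]

lemma sign_addLeft_odd {m : ℕ} [NeZero m] (hm : Odd m) (c : ZMod m) :
    Equiv.Perm.sign (Equiv.addLeft c) = 1 := by
  have h1 : (Equiv.addLeft c) ^ m = 1 := by
    rw [addLeft_pow, ZMod.natCast_self, zero_mul]; ext x; simp
  have h2 := congrArg Equiv.Perm.sign h1
  rw [map_pow, map_one] at h2
  rcases Int.units_eq_one_or (Equiv.Perm.sign (Equiv.addLeft c)) with h | h
  · exact h
  · rw [h, hm.neg_one_pow] at h2; exact absurd h2 (by decide)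

lemma sign_addLeft_one_even {m : ℕ} [NeZero m] (hm : Even m) (hm2 : 2 ≤ m) :
    Equiv.Perm.sign (Equiv.addLeft (1 : ZMod m)) = -1 := by
  haveI : Fact (1 < m) := ⟨hm2⟩
  have hc : (Equiv.addLeft (1 : ZMod m)).IsCycle := by
    refine ⟨0, by simp, fun y hy => ?_⟩
    refine ⟨(y.val : ℤ), ?_⟩
    rw [zpow_natCast, addLeft_pow]
    show (y.val : ZMod m) * 1 + 0 = y
    rw [mul_one, add_zero, ZMod.natCast_rightInverse y]
  have hsupp : (Equiv.addLeft (1 : ZMod m)).support = Finset.univ := by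
    ext x; simp
  have := hc.sign
  rw [hsupp, Finset.card_univ, ZMod.card, hm.neg_one_pow] at this
  rw [this]

lemma sign_addLeft_even {m : ℕ} [NeZero m] (hm : Even m) (hm2 : 2 ≤ m) (c : ZMod m) :
    Equiv.Perm.sign (Equiv.addLeft c) = (-1) ^ c.val := by
  rw [addLeft_eq_pow, map_pow, sign_addLeft_one_even hm hm2]

lemma sign_dec (a m : ℕ) [NeZero a] [NeZero m] (q : ℤ)
    [NeZero (a * m)]
    (π : Equiv.Perm (ZMod (a * m))) (hπ : ∀ x, π x = (q : ZMod (a * m)) * x)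
    (πa : Equiv.Perm (ZMod a)) (hπa : ∀ x, πa x = (q : ZMod a) * x)
    (πm : Equiv.Perm (ZMod m)) (hπm : ∀ x, πm x = (q : ZMod m) * x) :
    Equiv.Perm.sign π = Equiv.Perm.sign πa ^ m *
      ∏ r : ZMod a, (Equiv.Perm.sign πm *
        Equiv.Perm.sign (Equiv.addLeft ((((q : ZMod (a * m)).val * r.val) / a : ℕ) : ZMod m))) := by
  have ha0 : a ≠ 0 := NeZero.ne a
  have hm0 : m ≠ 0 := NeZero.ne m
  set Q : ℕ := (q : ZMod (a * m)).val with hQ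
  have hQam : ((Q : ℕ) : ZMod (a * m)) = (q : ZMod (a * m)) := ZMod.natCast_rightInverse _
  have hQa : ((Q : ℕ) : ZMod a) = (q : ZMod a) := by
    have := congrArg (ZMod.castHom (dvd_mul_right a m) (ZMod a)) hQam
    simpa using this
  have hQm : ((Q : ℕ) : ZMod m) = (q : ZMod m) := by
    have := congrArg (ZMod.castHom (dvd_mul_left m a) (ZMod m)) hQam
    simpa using this
  set c : ZMod a → ZMod m := fun r => (((Q * r.val) / a : ℕ) : ZMod m) with hc
  set τ : ZMod a → Equiv.Perm (ZMod m) := fun r => πm.trans (Equiv.addLeft (c r)) with hτ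
  set P : Equiv.Perm (ZMod a × ZMod m) :=
    (Equiv.prodCongrLeft (fun _ : ZMod m => πa)) * (Equiv.prodCongrRight τ) with hP
  -- the bijection
  set f : ZMod a × ZMod m → ZMod (a * m) := fun p => ((p.1.val + a * p.2.val : ℕ) : ZMod (a * m))
    with hf
  have hbound : ∀ (r : ZMod a) (y : ZMod m), r.val + a * y.val < a * m := by
    intro r y
    have h1 : r.val < a := ZMod.val_lt r
    have h2 : y.val ≤ m - 1 := Nat.le_pred_of_lt (ZMod.val_lt y)
    have h3 : a * y.val ≤ a * (m - 1) := Nat.mul_le_mul_left a h2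
    have h4 : a * (m - 1) + a = a * m := by
      cases m with
      | zero => omega
      | succ k => simp [Nat.mul_succ]
    omega
  have hinj : Function.Injective f := by
    rintro ⟨r, y⟩ ⟨r', y'⟩ h
    simp only [hf] at h
    have hv := congrArg ZMod.val h
    rw [ZMod.val_cast_of_lt (hbound r y), ZMod.val_cast_of_lt (hbound r' y')] at hv
    have hr : r.val = r'.val := by
      have e1 : (r.val + a * y.val) % a = r.val % a := by
        simp [Nat.add_mul_mod_self_left]
      have e2 : (r'.val + a * y'.val) % a = r'.val % a := by
        simp [Nat.add_mul_mod_self_left]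
      rw [Nat.mod_eq_of_lt (ZMod.val_lt r)] at e1
      rw [Nat.mod_eq_of_lt (ZMod.val_lt r')] at e2
      rw [← e1, ← e2, hv]
    have hy : y.val = y'.val := by
      have : a * y.val = a * y'.val := by omega
      exact Nat.eq_of_mul_eq_mul_left (Nat.pos_of_ne_zero ha0) this
    exact Prod.ext (ZMod.val_injective _ hr) (ZMod.val_injective _ hy)
  have hbij : Function.Bijective f := by
    rw [Fintype.bijective_iff_injective_and_card]
    exact ⟨hinj, by simp [ZMod.card]⟩
  set e : (ZMod a × ZMod m) ≃ ZMod (a * m) := Equiv.ofBijective f hbij with he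
  have key : ∀ p : ZMod a × ZMod m, π (e p) = e (P p) := by
    rintro ⟨r, y⟩
    have hPval : P (r, y) = (πa r, τ r y) := rfl
    have h1 : πa r = ((Q * r.val : ℕ) : ZMod a) := by
      rw [hπa, ← hQa]
      push_cast
      rw [ZMod.natCast_rightInverse r]
    have h2 : τ r y = ((Q * y.val + Q * r.val / a : ℕ) : ZMod m) := by
      show Equiv.addLeft (c r) (πm y) = _
      rw [hπm, ← hQm]
      show c r + (Q : ZMod m) * y = _
      rw [hc]
      push_cast
      rw [ZMod.natCast_rightInverse y]
      ring
    have hπaval : (πa r).val = (Q * r.val) % a := by rw [h1, ZMod.val_natCast]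
    have hτval : (τ r y).val = (Q * y.val + Q * r.val / a) % m := by rw [h2, ZMod.val_natCast]
    show π (f (r, y)) = f (πa r, τ r y)
    rw [hπ]
    simp only [hf]
    rw [← hQam, ← Nat.cast_mul, hπaval, hτval]
    rw [ZMod.natCast_eq_natCast_iff]
    rw [Nat.modEq_iff_dvd]
    push_cast
    rw [Int.emod_def, Int.emod_def]
    refine ⟨-((Q * y.val + Q * r.val / a : ℤ) / m), ?_⟩
    have hdiva : ((Q * r.val : ℕ) : ℤ) / (a : ℤ) = ((Q * r.val / a : ℕ) : ℤ) := by
      push_cast; exact (Int.natCast_div _ _).symm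
    push_cast at hdiva ⊢
    rw [hdiva]
    ring
  have hπP : π = e.permCongr P := by
    apply Equiv.ext
    intro x
    have h := key (e.symm x)
    rw [Equiv.apply_symm_apply] at h
    rw [h]
    rfl
  rw [hπP, Equiv.Perm.sign_permCongr, hP, map_mul]
  rw [Equiv.Perm.sign_prodCongrLeft, Equiv.Perm.sign_prodCongrRight]
  congr 1
  · rw [Finset.prod_const, Finset.card_univ, ZMod.card]
  · apply Finset.prod_congr rfl
    intro r _
    have : τ r = Equiv.addLeft (c r) * πm := rfl
    rw [this, map_mul, mul_comm]
lemma sign_prime (p : ℕ) [NeZero p] (hp : p.Prime) (hodd : p ≠ 2) (q : ℤ) (hq : Int.gcd q p = 1)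
    (π : Equiv.Perm (ZMod p)) (hπ : ∀ x, π x = (q : ZMod p) * x) :
    ((Equiv.Perm.sign π : ℤˣ) : ℤ) = jacobiSym q p := by
  haveI : Fact p.Prime := ⟨hp⟩
  have hp3 : 3 ≤ p := by have := hp.two_le; omega
  obtain ⟨g, hg⟩ := IsCyclic.exists_generator (α := (ZMod p)ˣ)
  have hgcard : orderOf g = p - 1 := by
    rw [orderOf_eq_card_of_forall_mem_zpowers hg, Nat.card_eq_fintype_card, ZMod.card_units p]
  have hg1 : (g : ZMod p) ≠ 1 := by
    intro h
    have : g = 1 := Units.ext h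
    rw [this, orderOf_one] at hgcard
    omega
  have hg0 : (g : ZMod p) ≠ 0 := g.ne_zero
  -- the generator gives an odd permutation
  have hfix : ∀ x : ZMod p, (g : ZMod p) * x = x ↔ x = 0 := by
    intro x
    constructor
    · intro h
      have h2 : ((g : ZMod p) - 1) * x = 0 := by linear_combination h
      rcases mul_eq_zero.mp h2 with h' | h'
      · exact absurd (sub_eq_zero.mp h') hg1
      · exact h'
    · intro h; simp [h]
  have hcyc : (mulPerm g).IsCycle := by
    refine ⟨1, ?_, fun y hy => ?_⟩
    · simp only [mulPerm_apply, mul_one]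
      intro h; exact hg1 h
    · have hy0 : y ≠ 0 := by
        intro h
        apply hy
        simp [h]
      obtain ⟨v, hv⟩ := isUnit_iff_ne_zero.mpr hy0
      obtain ⟨k, hk⟩ := (Submonoid.mem_powers_iff _ _).mp (mem_powers_iff_mem_zpowers.mpr (hg v))
      refine ⟨(k : ℤ), ?_⟩
      rw [zpow_natCast, ← mulPerm_pow]
      simp only [mulPerm_apply, mul_one]
      rw [hk, hv]
  have hsupp : (mulPerm g).support = ({0}ᶜ : Finset (ZMod p)) := by
    ext x
    simp only [Equiv.Perm.mem_support, mulPerm_apply, Finset.mem_compl, Finset.mem_singleton]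
    exact not_congr (hfix x)
  have hsignG : Equiv.Perm.sign (mulPerm g) = -1 := by
    have := hcyc.sign
    rw [hsupp, Finset.card_compl, Finset.card_singleton, ZMod.card] at this
    obtain ⟨k, hk⟩ := hp.odd_of_ne_two hodd
    have hev : Even (p - 1) := ⟨k, by omega⟩
    rw [hev.neg_one_pow] at this
    rw [this]
  -- legendre symbol of the generator is -1
  set gZ : ℤ := ((g : ZMod p).val : ℤ) with hgZ
  have hgcast : ((gZ : ℤ) : ZMod p) = (g : ZMod p) := by
    rw [hgZ]; push_cast; rw [ZMod.natCast_rightInverse]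
  have hgne : ((gZ : ℤ) : ZMod p) ≠ 0 := by rw [hgcast]; exact hg0
  have hns : ¬ IsSquare ((gZ : ℤ) : ZMod p) := by
    rw [hgcast]
    rintro ⟨x, hx⟩
    have hx0 : x ≠ 0 := by
      rintro rfl
      rw [mul_zero] at hx
      exact hg0 hx
    have hpow : (g : ZMod p) ^ ((p - 1) / 2) = 1 := by
      have h2 : 2 * ((p - 1) / 2) = p - 1 := by
        obtain ⟨k, hk⟩ := hp.odd_of_ne_two hodd
        omega
      rw [hx, ← pow_two, ← pow_mul, h2, ZMod.pow_card_sub_one_eq_one hx0]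
    have hdvd : orderOf (g : ZMod p) ∣ (p - 1) / 2 := orderOf_dvd_of_pow_eq_one hpow
    rw [orderOf_units, hgcard] at hdvd
    have := Nat.le_of_dvd (by omega) hdvd
    omega
  have hleg : legendreSym p gZ = -1 := by
    rcases legendreSym.eq_one_or_neg_one p hgne with h | h
    · exact absurd ((legendreSym.eq_one_iff p hgne).mp h) hns
    · exact h
  -- express q as a power of the generator
  obtain ⟨u, hu⟩ := isUnit_cast_of_gcd hq
  obtain ⟨t, ht⟩ := (Submonoid.mem_powers_iff _ _).mp (mem_powers_iff_mem_zpowers.mpr (hg u))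
  have hπu : π = (mulPerm g) ^ t := by
    rw [← mulPerm_pow, ht]
    ext x
    simp [hπ, hu]
  rw [hπu, map_pow, hsignG]
  have hcast : ((q : ℤ) : ZMod p) = ((gZ ^ t : ℤ) : ZMod p) := by
    push_cast
    rw [hgcast, ← Units.val_pow_eq_pow_val, ht, hu]
  have hlegq : legendreSym p q = (-1) ^ t := by
    show quadraticChar (ZMod p) ((q : ℤ) : ZMod p) = (-1) ^ t
    rw [hcast]
    push_cast
    rw [map_pow]
    have : quadraticChar (ZMod p) ((gZ : ℤ) : ZMod p) = legendreSym p gZ := rfl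
    rw [this, hleg]
  rw [← jacobiSym.legendreSym.to_jacobiSym, hlegq]
  push_cast
  ring
lemma units_neg_one_zpow (n : ℤ) (h : Odd n) : (-1 : ℤˣ) ^ n = -1 := by
  obtain ⟨k, hk⟩ := h
  have h2 : (-1 : ℤˣ) ^ (2 : ℤ) = 1 := by
    rw [show (2 : ℤ) = ((2 : ℕ) : ℤ) from rfl, zpow_natCast, pow_two]
    exact Int.units_mul_self _
  rw [hk, zpow_add, zpow_mul, h2, one_zpow, zpow_one, one_mul]

lemma units_pow_odd (s : ℤˣ) {k : ℕ} (hk : Odd k) : s ^ k = s := by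
  rcases Int.units_eq_one_or s with h | h <;> rw [h]
  · exact one_pow k
  · exact hk.neg_one_pow

lemma sign_dec_odd (a m : ℕ) [NeZero a] [NeZero m] (ha : Odd a) (hm : Odd m) (q : ℤ)
    [NeZero (a * m)]
    (π : Equiv.Perm (ZMod (a * m))) (hπ : ∀ x, π x = (q : ZMod (a * m)) * x)
    (πa : Equiv.Perm (ZMod a)) (hπa : ∀ x, πa x = (q : ZMod a) * x)
    (πm : Equiv.Perm (ZMod m)) (hπm : ∀ x, πm x = (q : ZMod m) * x) :
    Equiv.Perm.sign π = Equiv.Perm.sign πa * Equiv.Perm.sign πm := by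
  rw [sign_dec a m q π hπ πa hπa πm hπm]
  have h1 : ∀ r : ZMod a,
      Equiv.Perm.sign πm *
        Equiv.Perm.sign (Equiv.addLeft ((((q : ZMod (a * m)).val * r.val) / a : ℕ) : ZMod m)) =
      Equiv.Perm.sign πm := by
    intro r
    rw [sign_addLeft_odd hm, mul_one]
  rw [Finset.prod_congr rfl (fun r _ => h1 r), Finset.prod_const, Finset.card_univ, ZMod.card]
  rw [units_pow_odd _ hm, units_pow_odd _ ha]

lemma sign_odd : ∀ (n : ℕ) [NeZero n], Odd n → ∀ (q : ℤ), Int.gcd q n = 1 →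
    ∀ (π : Equiv.Perm (ZMod n)), (∀ x, π x = (q : ZMod n) * x) →
    ((Equiv.Perm.sign π : ℤˣ) : ℤ) = jacobiSym q n := by
  intro n
  induction n using Nat.strong_induction_on with
  | _ n ih =>
    intro _ hn q hq π hπ
    by_cases h1 : n = 1
    · subst h1
      have hπ1 : π = Equiv.refl _ := Equiv.ext fun x => Subsingleton.elim _ _
      rw [hπ1]
      simp
    by_cases h2 : n.Prime
    · refine sign_prime n h2 ?_ q hq π hπ
      rintro rfl
      exact (by decide : ¬ Odd 2) hn
    · have hodd := Nat.odd_iff.mp hn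
      have hn2 : 2 ≤ n := by omega
      obtain ⟨a, hdvd, ha2, haltn⟩ := Nat.exists_dvd_of_not_prime2 hn2 h2
      obtain ⟨m, rfl⟩ := hdvd
      have hcop : IsCoprime q ((a * m : ℕ) : ℤ) := Int.isCoprime_iff_gcd_eq_one.mpr hq
      have hcop' : IsCoprime q ((a : ℤ) * (m : ℤ)) := by push_cast at hcop; exact hcop
      have hqa : Int.gcd q a = 1 := Int.isCoprime_iff_gcd_eq_one.mp hcop'.of_mul_right_left
      have hqm : Int.gcd q m = 1 := Int.isCoprime_iff_gcd_eq_one.mp hcop'.of_mul_right_right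
      have ham := (Nat.odd_mul.mp hn)
      have hao : Odd a := ham.1
      have hmo : Odd m := ham.2
      have ha0 : a ≠ 0 := by rintro rfl; simp at hn2
      have hm0 : m ≠ 0 := by rintro rfl; rw [mul_zero] at hn2; omega
      haveI : NeZero a := ⟨ha0⟩
      haveI : NeZero m := ⟨hm0⟩
      obtain ⟨πa, hπa⟩ := exists_mulPerm a q hqa
      obtain ⟨πm, hπm⟩ := exists_mulPerm m q hqm
      have hmlt : m < a * m := by
        have := Nat.mul_lt_mul_of_lt_of_le (show 1 < a by omega) (le_refl m)
          (Nat.pos_of_ne_zero hm0)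
        omega
      rw [sign_dec_odd a m hao hmo q π hπ πa hπa πm hπm]
      have h1 := ih a haltn hao q hqa πa hπa
      have h2 := ih m hmlt hmo q hqm πm hπm
      rw [jacobiSym.mul_right q a m, ← h1, ← h2]
      push_cast
      ring
/-- For any integers `n > 0` and `q` coprime to `n`, the sign of the multiplication-by-`q`
permutation of `ℤ/nℤ` equals `(-1)^{(q-1)/2}` if `n ≡ 0 (mod 4)`, the Jacobi symbol `(q/n)` if
`n` is odd, and `1` if `n ≡ 2 (mod 4)`. -/
theorem sign_mul_perm_formula
    (n : ℕ) [NeZero n] (q : ℤ) (hq : Int.gcd q n = 1)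
    (π : Equiv.Perm (ZMod n)) (hπ : ∀ x : ZMod n, π x = (q : ZMod n) * x) :
    (n % 4 = 0 → Equiv.Perm.sign π = (-1 : ℤˣ) ^ ((q - 1) / 2)) ∧
    (n % 2 = 1 → (Equiv.Perm.sign π : ℤ) = jacobiSym q n) ∧
    (n % 4 = 2 → Equiv.Perm.sign π = 1) := by
  refine ⟨?_, ?_, ?_⟩
  · -- n ≡ 0 mod 4
    intro h4
    obtain ⟨m, rfl⟩ : ∃ m, n = 2 * m := ⟨n / 2, by omega⟩
    have hne := NeZero.ne (2 * m)
    have hm0 : m ≠ 0 := by omega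
    haveI : NeZero m := ⟨hm0⟩
    have hmev : Even m := by
      rcases Nat.even_or_odd m with h | h
      · exact h
      · exfalso; obtain ⟨k, hk⟩ := h; omega
    have hm2 : 2 ≤ m := by obtain ⟨k, hk⟩ := hmev; omega
    -- coprimality
    have hcop : IsCoprime q ((2 * m : ℕ) : ℤ) := Int.isCoprime_iff_gcd_eq_one.mpr hq
    have hcop' : IsCoprime q ((2 : ℤ) * (m : ℤ)) := by push_cast at hcop; exact hcop
    have hq2 : Int.gcd q 2 = 1 := by
      have := Int.isCoprime_iff_gcd_eq_one.mp hcop'.of_mul_right_left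
      simpa using this
    have hqm : Int.gcd q m = 1 := Int.isCoprime_iff_gcd_eq_one.mp hcop'.of_mul_right_right
    have hq2' : Int.gcd q ((2 : ℕ) : ℤ).natAbs = 1 := by simpa using hq2
    have hqodd : ¬ (2 : ℤ) ∣ q := by
      intro hdvd
      have : (2 : ℤ) ∣ Int.gcd q 2 := Int.dvd_coe_gcd hdvd (dvd_refl 2)
      rw [hq2] at this
      omega
    obtain ⟨π2, hπ2⟩ := exists_mulPerm 2 q hq2
    obtain ⟨πm, hπm⟩ := exists_mulPerm m q hqm
    have hq21 : (q : ZMod 2) = 1 := by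
      have h0 : (q : ZMod 2) ≠ 0 := fun h =>
        hqodd (by exact_mod_cast (ZMod.intCast_zmod_eq_zero_iff_dvd q 2).mp h)
      revert h0
      have : ∀ x : ZMod 2, x ≠ 0 → x = 1 := by decide
      exact this _
    have hπ2id : π2 = 1 := by
      apply Equiv.ext
      intro x
      rw [hπ2, hq21, one_mul]
      rfl
    rw [sign_dec 2 m q π hπ π2 hπ2 πm hπm, hπ2id, map_one, one_pow, one_mul]
    have huniv : (Finset.univ : Finset (ZMod 2)) = {0, 1} := by decide
    rw [huniv, Finset.prod_insert (by decide), Finset.prod_singleton]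
    set Q : ℕ := (q : ZMod (2 * m)).val with hQdef
    have hc0 : ((Q * (0 : ZMod 2).val / 2 : ℕ) : ZMod m) = 0 := by
      simp [ZMod.val_zero]
    have hv1 : (1 : ZMod 2).val = 1 := rfl
    have hadd0 : (Equiv.addLeft (0 : ZMod m)) = (1 : Equiv.Perm (ZMod m)) := by
      apply Equiv.ext; intro x; simp
    rw [hc0, hadd0, map_one, mul_one, hv1, mul_one]
    rw [sign_addLeft_even hmev hm2, ZMod.val_natCast]
    rw [← mul_assoc, Int.units_mul_self, one_mul]
    -- now relate parities
    have hQam : ((Q : ℕ) : ZMod (2 * m)) = (q : ZMod (2 * m)) := ZMod.natCast_rightInverse _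
    have hmod : ((Q : ℤ)) ≡ q [ZMOD (2 * m : ℕ)] := by
      rw [← ZMod.intCast_eq_intCast_iff]
      push_cast
      push_cast at hQam
      exact hQam
    have hdvd4 : ((4 : ℤ)) ∣ (q - (Q : ℤ)) := by
      have := Int.ModEq.dvd hmod
      have h4' : (4 : ℤ) ∣ ((2 * m : ℕ) : ℤ) := by
        push_cast
        obtain ⟨k, hk⟩ := hmev
        have : m % 2 = 0 := by omega
        have h4n : (4 : ℕ) ∣ 2 * m := by omega
        exact_mod_cast Int.natCast_dvd_natCast.mpr h4n
      exact dvd_trans h4' this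
    obtain ⟨t, ht⟩ := hdvd4
    have hqodd' : q % 2 = 1 := by
      rcases Int.emod_two_eq_zero_or_one q with h | h
      · exfalso; exact hqodd (Int.dvd_of_emod_eq_zero h)
      · exact h
    -- parity of (q-1)/2 vs Q/2
    have hQeq : (Q : ℤ) = q - 4 * t := by omega
    have hQdiv : ((Q / 2 : ℕ) : ℤ) = (Q : ℤ) / 2 := by
      exact_mod_cast Int.natCast_div Q 2
    have hparity : (Q / 2) % 2 = (((q - 1) / 2) % 2).toNat := by
      have h1 : ((Q / 2 : ℕ) : ℤ) % 2 = ((q - 1) / 2) % 2 := by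
        rw [hQdiv, hQeq]
        omega
      omega
    -- reduce mod m keeps parity since m is even
    have hparm : (Q / 2) % m % 2 = (Q / 2) % 2 := by
      obtain ⟨k, hk⟩ := hmev
      have : m = 2 * k := by omega
      rw [this]
      exact Nat.mod_mod_of_dvd _ ⟨k, rfl⟩
    rcases Int.even_or_odd ((q - 1) / 2) with hev | hodd'
    · have : Even ((Q / 2) % m) := by
        rw [Nat.even_iff, hparm, hparity]
        rcases hev with ⟨k, hk⟩
        omega
      rw [this.neg_one_pow, hev.neg_one_zpow]
    · have : Odd ((Q / 2) % m) := by
        rw [Nat.odd_iff, hparm, hparity]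
        rcases hodd' with ⟨k, hk⟩
        omega
      rw [this.neg_one_pow, units_neg_one_zpow _ hodd']
  · -- n odd
    intro h2
    exact sign_odd n (Nat.odd_iff.mpr h2) q hq π hπ
  · -- n ≡ 2 mod 4
    intro h4
    obtain ⟨m, rfl⟩ : ∃ m, n = 2 * m := ⟨n / 2, by omega⟩
    have hm0 : m ≠ 0 := by omega
    haveI : NeZero m := ⟨hm0⟩
    have hmo : Odd m := by
      rcases Nat.even_or_odd m with h | h
      · exfalso; obtain ⟨k, hk⟩ := h; omega
      · exact h
    have hcop : IsCoprime q ((2 * m : ℕ) : ℤ) := Int.isCoprime_iff_gcd_eq_one.mpr hq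
    have hcop' : IsCoprime q ((2 : ℤ) * (m : ℤ)) := by push_cast at hcop; exact hcop
    have hq2 : Int.gcd q 2 = 1 := by
      have := Int.isCoprime_iff_gcd_eq_one.mp hcop'.of_mul_right_left
      simpa using this
    have hqm : Int.gcd q m = 1 := Int.isCoprime_iff_gcd_eq_one.mp hcop'.of_mul_right_right
    have hqodd : ¬ (2 : ℤ) ∣ q := by
      intro hdvd
      have : (2 : ℤ) ∣ Int.gcd q 2 := Int.dvd_coe_gcd hdvd (dvd_refl 2)
      rw [hq2] at this
      omega
    obtain ⟨π2, hπ2⟩ := exists_mulPerm 2 q hq2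
    obtain ⟨πm, hπm⟩ := exists_mulPerm m q hqm
    have hq21 : (q : ZMod 2) = 1 := by
      have h0 : (q : ZMod 2) ≠ 0 := fun h =>
        hqodd (by exact_mod_cast (ZMod.intCast_zmod_eq_zero_iff_dvd q 2).mp h)
      revert h0
      have : ∀ x : ZMod 2, x ≠ 0 → x = 1 := by decide
      exact this _
    have hπ2id : π2 = 1 := by
      apply Equiv.ext
      intro x
      rw [hπ2, hq21, one_mul]
      rfl
    rw [sign_dec 2 m q π hπ π2 hπ2 πm hπm, hπ2id, map_one, one_pow, one_mul]
    have h1 : ∀ r : ZMod 2,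
        Equiv.Perm.sign πm *
          Equiv.Perm.sign (Equiv.addLeft ((((q : ZMod (2 * m)).val * r.val) / 2 : ℕ) : ZMod m)) =
        Equiv.Perm.sign πm := by
      intro r
      rw [sign_addLeft_odd hmo, mul_one]
    rw [Finset.prod_congr rfl (fun r _ => h1 r), Finset.prod_const, Finset.card_univ, ZMod.card]
    rw [pow_two, Int.units_mul_self]
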